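/- Assume conditions B1–B5 hold for every trial s ∈ {1,…,m}: (B1) for every ω with S ω = s and every a ∈ {z, z'}, Z ω = a implies Ypo a ω = Y ω; (B2) for every a ∈ {z, z'} and every x with μ(X = x, S = s) > 0, E[Ypo a | X = x, S = s, Z = a] = E[Ypo a | X = x, S = s]; (B3) for every a ∈ {z, z'} and every x with μ(X = x, S = s) > 0, μ(Z = a, X = x, S = s) > 0; (B4) for every x with μ(X = x, S = 0) > 0, E[Ypo z − Ypo z' | X = x, S = 0] = E[Ypo z − Ypo z' | X = x, S = s]; (B5) for every x with μ(X = x, S = 0) > 0, μ(X = x, S = s) > 0. Then the transported effects are homogeneous across trials: for all s, s' ∈ {1,…,m}, E[ b_s(X) | S = 0 ] = E[ b_{s'}(X) | S = 0 ], where b_s(x) := E[Y | X = x, S = s, Z = z] − E[Y | X = x, S = s, Z = z']. -/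

import Mathlib

open MeasureTheory ProbabilityTheory

/-- Conditional expectation `E[W | A] := ∫ W dμ(·|A)` where `μ(·|A) := μ(· ∩ A)/μ(A)`. -/
noncomputable def condMean {Ω : Type*} [MeasurableSpace Ω] (μ : Measure Ω)
    (A : Set Ω) (W : Ω → ℝ) : ℝ :=
  ∫ ω, W ω ∂(μ[|A])

/-- Conditional probability `Pr[B | A] := μ(B ∩ A)/μ(A)`. -/
noncomputable def condPr {Ω : Type*} [MeasurableSpace Ω] (μ : Measure Ω)
    (A B : Set Ω) : ℝ :=
  (μ (B ∩ A) / μ A).toReal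


section Helpers

variable {Ω : Type*} [MeasurableSpace Ω] {μ : Measure Ω}

lemma aeeq_restrict_of_eqOn {f g : Ω → ℝ}
    (hf : AEStronglyMeasurable f μ) (hg : AEStronglyMeasurable g μ)
    {A : Set Ω} (h : ∀ ω ∈ A, f ω = g ω) : f =ᵐ[μ.restrict A] g := by
  obtain ⟨f', hf'm, hff'⟩ := hf
  obtain ⟨g', hg'm, hgg'⟩ := hg
  have hmeas : MeasurableSet {ω | f' ω = g' ω} :=
    measurableSet_eq_fun hf'm.measurable hg'm.measurable
  have hnull : μ ({ω | f' ω = g' ω}ᶜ ∩ A) = 0 := by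
    have hsub : {ω | f' ω = g' ω}ᶜ ∩ A ⊆ {ω | f ω = f' ω}ᶜ ∪ {ω | g ω = g' ω}ᶜ := by
      intro ω hω
      by_contra hcon
      simp only [Set.mem_union, Set.mem_compl_iff, Set.mem_setOf_eq, not_or, not_not] at hcon
      have := h ω hω.2
      exact hω.1 (by simp only [Set.mem_setOf_eq]; rw [← hcon.1, ← hcon.2, this])
    refine measure_mono_null hsub (measure_union_null ?_ ?_)
    · exact ae_iff.mp hff'
    · exact ae_iff.mp hgg'
  have h2 : μ.restrict A {ω | f' ω = g' ω}ᶜ = 0 := by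
    rw [Measure.restrict_apply hmeas.compl]; exact hnull
  have h3 : f' =ᵐ[μ.restrict A] g' := by
    rw [Filter.EventuallyEq, ae_iff]
    convert h2 using 2
    rfl
  have hfr : f =ᵐ[μ.restrict A] f' := ae_restrict_of_ae hff'
  have hgr : g =ᵐ[μ.restrict A] g' := ae_restrict_of_ae hgg'
  exact hfr.trans (h3.trans hgr.symm)

lemma condMean_congr_of_eqOn {f g : Ω → ℝ}
    (hf : AEStronglyMeasurable f μ) (hg : AEStronglyMeasurable g μ)
    {A : Set Ω} (h : ∀ ω ∈ A, f ω = g ω) : condMean μ A f = condMean μ A g := by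
  refine integral_congr_ae ?_
  rw [ProbabilityTheory.cond]
  exact Measure.ae_smul_measure (aeeq_restrict_of_eqOn hf hg h) _

lemma integrable_cond {f : Ω → ℝ} (hf : Integrable f μ) {A : Set Ω} (hA : μ A ≠ 0) :
    Integrable f (μ[|A]) := by
  rw [ProbabilityTheory.cond]
  exact (hf.restrict).smul_measure (ENNReal.inv_ne_top.mpr hA)

end Helpers

theorem stmt_8
    {Ω 𝒳 𝒵 : Type*} [MeasurableSpace Ω]
    [Fintype 𝒳] [Nonempty 𝒳] [MeasurableSpace 𝒳]
    [Fintype 𝒵] [Nonempty 𝒵] [MeasurableSpace 𝒵] [DecidableEq 𝒵]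
    (μ : Measure Ω) [IsProbabilityMeasure μ]
    (m : ℕ) (hm : 1 ≤ m)
    (X : Ω → 𝒳) (S : Ω → Fin (m + 1)) (Z : Ω → 𝒵) (Y : Ω → ℝ) (Ypo : 𝒵 → Ω → ℝ)
    (hX : Measurable X) (hS : Measurable S) (hZ : Measurable Z)
    (hY : Integrable Y μ) (hYpo : ∀ a, Integrable (Ypo a) μ)
    (z z' : 𝒵) (hzz' : z ≠ z')
    (hS0 : 0 < μ {ω | S ω = 0})
    (B1 : ∀ s : Fin (m + 1), s ≠ 0 → ∀ ω, S ω = s →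
      ∀ a ∈ ({z, z'} : Set 𝒵), Z ω = a → Ypo a ω = Y ω)
    (B2 : ∀ s : Fin (m + 1), s ≠ 0 → ∀ a ∈ ({z, z'} : Set 𝒵), ∀ x : 𝒳,
      0 < μ {ω | X ω = x ∧ S ω = s} →
      condMean μ {ω | X ω = x ∧ S ω = s ∧ Z ω = a} (Ypo a)
        = condMean μ {ω | X ω = x ∧ S ω = s} (Ypo a))
    (B3 : ∀ s : Fin (m + 1), s ≠ 0 → ∀ a ∈ ({z, z'} : Set 𝒵), ∀ x : 𝒳,
      0 < μ {ω | X ω = x ∧ S ω = s} → 0 < μ {ω | Z ω = a ∧ X ω = x ∧ S ω = s})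
    (B4 : ∀ s : Fin (m + 1), s ≠ 0 → ∀ x : 𝒳, 0 < μ {ω | X ω = x ∧ S ω = 0} →
      condMean μ {ω | X ω = x ∧ S ω = 0} (fun ω => Ypo z ω - Ypo z' ω)
        = condMean μ {ω | X ω = x ∧ S ω = s} (fun ω => Ypo z ω - Ypo z' ω))
    (B5 : ∀ s : Fin (m + 1), s ≠ 0 → ∀ x : 𝒳, 0 < μ {ω | X ω = x ∧ S ω = 0} →
      0 < μ {ω | X ω = x ∧ S ω = s}) :
    ∀ s s' : Fin (m + 1), s ≠ 0 → s' ≠ 0 →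
      condMean μ {ω | S ω = 0}
          (fun ω => condMean μ {ω' | X ω' = X ω ∧ S ω' = s ∧ Z ω' = z} Y
                  - condMean μ {ω' | X ω' = X ω ∧ S ω' = s ∧ Z ω' = z'} Y)
        = condMean μ {ω | S ω = 0}
            (fun ω => condMean μ {ω' | X ω' = X ω ∧ S ω' = s' ∧ Z ω' = z} Y
                    - condMean μ {ω' | X ω' = X ω ∧ S ω' = s' ∧ Z ω' = z'} Y) := by

  intro s s' hs hs'
  -- main pointwise identity
  have hmain : ∀ t : Fin (m + 1), t ≠ 0 → ∀ x : 𝒳, 0 < μ {ω | X ω = x ∧ S ω = 0} →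
      condMean μ {ω | X ω = x ∧ S ω = t ∧ Z ω = z} Y
        - condMean μ {ω | X ω = x ∧ S ω = t ∧ Z ω = z'} Y
      = condMean μ {ω | X ω = x ∧ S ω = 0} (fun ω => Ypo z ω - Ypo z' ω) := by
    intro t ht x hx
    have hxs := B5 t ht x hx
    have h1 : ∀ a ∈ ({z, z'} : Set 𝒵),
        condMean μ {ω | X ω = x ∧ S ω = t ∧ Z ω = a} Y
          = condMean μ {ω | X ω = x ∧ S ω = t} (Ypo a) := by
      intro a ha
      rw [← B2 t ht a ha x hxs]
      refine condMean_congr_of_eqOn hY.aestronglyMeasurable (hYpo a).aestronglyMeasurable ?_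
      intro ω hω
      exact (B1 t ht ω hω.2.1 a ha hω.2.2).symm
    rw [h1 z (by simp), h1 z' (by simp)]
    have hsub : condMean μ {ω | X ω = x ∧ S ω = t} (Ypo z)
        - condMean μ {ω | X ω = x ∧ S ω = t} (Ypo z')
        = condMean μ {ω | X ω = x ∧ S ω = t} (fun ω => Ypo z ω - Ypo z' ω) := by
      unfold condMean
      exact (integral_sub (integrable_cond (hYpo z) hxs.ne')
        (integrable_cond (hYpo z') hxs.ne')).symm
    rw [hsub, ← B4 t ht x hx]
  -- the integrands agree a.e. under μ[|{S = 0}]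
  refine integral_congr_ae ?_
  have hbad : (μ[|{ω | S ω = 0}]) {ω | μ {ω' | X ω' = X ω ∧ S ω' = 0} = 0} = 0 := by
    have hsub : {ω | μ {ω' | X ω' = X ω ∧ S ω' = 0} = 0}
        ⊆ ⋃ x ∈ {x : 𝒳 | μ {ω' | X ω' = x ∧ S ω' = 0} = 0}, X ⁻¹' {x} := by
      intro ω hω
      exact Set.mem_biUnion hω rfl
    refine measure_mono_null hsub ?_
    refine (measure_biUnion_null_iff (Set.to_countable _)).mpr ?_
    intro x hx
    have hmeas0 : MeasurableSet {ω : Ω | S ω = 0} := hS (measurableSet_singleton 0)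
    rw [ProbabilityTheory.cond, Measure.smul_apply, Measure.restrict_apply' hmeas0]
    have : X ⁻¹' {x} ∩ {ω | S ω = 0} = {ω' | X ω' = x ∧ S ω' = 0} := by
      ext ω; simp [Set.mem_preimage]
    rw [this, hx, smul_zero]
  have hmeas0 : MeasurableSet {ω | S ω = 0} := hS (measurableSet_singleton 0)
  have hae : ∀ᵐ ω ∂(μ[|{ω | S ω = 0}]), 0 < μ {ω' | X ω' = X ω ∧ S ω' = 0} := by
    rw [ae_iff]
    refine measure_mono_null ?_ hbad
    intro ω hω
    simp only [Set.mem_setOf_eq, not_lt, nonpos_iff_eq_zero] at hω ⊢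
    exact hω
  filter_upwards [hae] with ω hω
  rw [hmain s hs (X ω) hω, hmain s' hs' (X ω) hω]
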